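/- For all n, k ≥ 2, assuming f(n,k) is finite, the inequality f(n+1, k) ≤ (f(n,k) + 1)·m(n,k) + f(n,k) holds, where m(n,k) is the number of k-ary minimal words of Zimin type n. -/

import Mathlib

open List Filter

/-- The Zimin pattern `Z_k` as a word over variables `0, 1, ..., k-1`
(`Z_0` is empty, `Z_{k+1} = Z_k · x_{k+1} · Z_k`). -/
def ziminWord : ℕ → List ℕ
  | 0 => []
  | k + 1 => ziminWord k ++ k :: ziminWord k

/-- `w` is the image of the Zimin pattern `Z_k` under a non-erasing morphism. -/
def IsZiminImage {α : Type*} (k : ℕ) (w : List α) : Prop :=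
  ∃ h : ℕ → List α, (∀ i, h i ≠ []) ∧ w = (ziminWord k).flatMap h

/-- The Zimin type of `w`: the maximum `k` such that `w` is an image of `Z_k`
under a non-erasing morphism (0 for the empty word). -/
noncomputable def ziminType {α : Type*} (w : List α) : ℕ :=
  sSup {k | IsZiminImage k w}

/-- The Zimin pattern `Z_k` embeds in `w`: some factor of `w` is an image of `Z_k`. -/
def ziminEmbeds {α : Type*} (k : ℕ) (w : List α) : Prop :=
  ∃ u : List α, u <:+: w ∧ IsZiminImage k u

/-- Length of the longest border (proper prefix that is also a proper suffix) of `w`. -/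
noncomputable def bordLen {α : Type*} (w : List α) : ℕ :=
  sSup {j | w.take j <:+ w ∧ j < w.length}

/-- Length of the longest short border (border of length `< |w|/2`) of `w`. -/
noncomputable def shortBordLen {α : Type*} (w : List α) : ℕ :=
  sSup {j | w.take j <:+ w ∧ 2 * j < w.length}

/-- The longest border of `w`. -/
noncomputable def bord {α : Type*} (w : List α) : List α := w.take (bordLen w)

/-- The longest short border of `w`. -/
noncomputable def shortBord {α : Type*} (w : List α) : List α := w.take (shortBordLen w)

/-- The Fibonacci words over `Bool` (`a = false`, `b = true`), with
`fibWord 0 = F_0 = a`, `fibWord 1 = F_1 = F_0 F_{-1} = ab`, `F_{n} = F_{n-1} F_{n-2}`. -/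
def fibWord : ℕ → List Bool
  | 0 => [false]
  | 1 => [false, true]
  | n + 2 => fibWord (n + 1) ++ fibWord n

/-- The Fibonacci numbers `Φ_n = |F_n|` (`Φ_0 = 1, Φ_1 = 2, Φ_2 = 3, ...`). -/
def Phi (n : ℕ) : ℕ := (fibWord n).length

/-- The infinite Fibonacci word `F_∞` (0-indexed letters). -/
def fibInf (i : ℕ) : Bool := (fibWord (i + 2)).getD i false

/-- The prefix `F_∞[1..n]` of the infinite Fibonacci word. -/
def fibPrefix (n : ℕ) : List Bool := (List.range n).map fibInf


/-- `f(n,k)`: the minimum `N` such that `Z_n` embeds in every word of length at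
least `N` over a `k`-letter alphabet. -/
noncomputable def fbound (n k : ℕ) : ℕ :=
  sInf {N | ∀ w : List (Fin k), N ≤ w.length → ziminEmbeds n w}

/-- A word of Zimin type `n` is minimal if every proper factor has Zimin type
strictly less than `n`. -/
def IsMinimalZimin {α : Type*} (n : ℕ) (w : List α) : Prop :=
  ziminType w = n ∧ ∀ u : List α, u <:+: w → u ≠ w → ziminType u < n

/-- `m(n,k)`: the number of `k`-ary minimal words of Zimin type `n`. -/
noncomputable def mcount (n k : ℕ) : ℕ :=
  {w : List (Fin k) | IsMinimalZimin n w}.ncard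

section ZiminAux

variable {α : Type*}

lemma flatMap_congr' (l : List ℕ) (h h' : ℕ → List α) (hh : ∀ a ∈ l, h a = h' a) :
    l.flatMap h = l.flatMap h' := by
  induction l with
  | nil => rfl
  | cons a l ih =>
    simp only [List.flatMap_cons]
    rw [hh a (by simp), ih (fun b hb => hh b (by simp [hb]))]

lemma mem_ziminWord_lt : ∀ {k i : ℕ}, i ∈ ziminWord k → i < k := by
  intro k
  induction k with
  | zero => intro i h; simp [ziminWord] at h
  | succ k ih =>
    intro i h
    simp only [ziminWord, List.mem_append, List.mem_cons] at h
    rcases h with h | h | h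
    · exact (ih h).trans (Nat.lt_succ_self k)
    · omega
    · exact (ih h).trans (Nat.lt_succ_self k)

lemma length_flatMap_ge (h : ℕ → List α) (hne : ∀ i, h i ≠ []) (l : List ℕ) :
    l.length ≤ (l.flatMap h).length := by
  induction l with
  | nil => simp
  | cons a l ih =>
    simp only [List.flatMap_cons, List.length_append, List.length_cons]
    have : 1 ≤ (h a).length := List.length_pos_iff.mpr (hne a)
    omega

lemma ziminWord_length_ge (k : ℕ) : k ≤ (ziminWord k).length := by
  induction k with
  | zero => simp
  | succ k ih => simp only [ziminWord, List.length_append, List.length_cons]; omega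

lemma IsZiminImage.le_length {k : ℕ} {w : List α} (h : IsZiminImage k w) : k ≤ w.length := by
  obtain ⟨g, hne, rfl⟩ := h
  exact (ziminWord_length_ge k).trans (length_flatMap_ge _ hne _)

lemma bddAbove_setOf_isZiminImage (w : List α) : BddAbove {k | IsZiminImage k w} :=
  ⟨w.length, fun _ hk => hk.le_length⟩

lemma le_ziminType {n : ℕ} {w : List α} (h : IsZiminImage n w) : n ≤ ziminType w :=
  le_csSup (bddAbove_setOf_isZiminImage w) h

lemma isZiminImage_ziminType {n : ℕ} {w : List α} (h : IsZiminImage n w) :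
    IsZiminImage (ziminType w) w :=
  Nat.sSup_mem ⟨n, h⟩ (bddAbove_setOf_isZiminImage w)

lemma IsZiminImage.succ_elim {k : ℕ} {w : List α} (h : IsZiminImage (k + 1) w) :
    ∃ A x : List α, IsZiminImage k A ∧ x ≠ [] ∧ w = A ++ x ++ A := by
  obtain ⟨g, hne, rfl⟩ := h
  exact ⟨(ziminWord k).flatMap g, g k, ⟨g, hne, rfl⟩, hne k, by
    simp [ziminWord, List.flatMap_append, List.flatMap_cons, List.append_assoc]⟩

lemma IsZiminImage.pred {j : ℕ} {w : List α} (h : IsZiminImage (j + 2) w) :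
    IsZiminImage (j + 1) w := by
  obtain ⟨g, hne, rfl⟩ := h
  set C := (ziminWord j).flatMap g with hC
  set y := g j ++ C ++ g (j + 1) ++ C ++ g j with hy
  refine ⟨fun i => if i = j then y else g i, fun i => ?_, ?_⟩
  · by_cases hi : i = j
    · simp only [hi, if_pos rfl, hy]
      intro hcon
      have := List.append_eq_nil_iff.mp hcon
      exact hne j this.2
    · simpa [hi] using hne i
  · have hcong : (ziminWord j).flatMap (fun i => if i = j then y else g i) = C := by
      rw [hC]
      exact (flatMap_congr' _ _ _ (fun a ha => by
        simp [Nat.ne_of_lt (mem_ziminWord_lt ha)])).symm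
    show (ziminWord (j + 2)).flatMap g = (ziminWord (j + 1)).flatMap _
    simp only [ziminWord, List.flatMap_append, List.flatMap_cons, hcong, if_pos rfl, ← hC]
    simp [hy, List.append_assoc]

lemma isZiminImage_of_le {n : ℕ} (hn : 1 ≤ n) :
    ∀ s, n ≤ s → ∀ {w : List α}, IsZiminImage s w → IsZiminImage n w := by
  intro s
  induction s with
  | zero => intro h; omega
  | succ s ih =>
    intro hns w hw
    rcases Nat.lt_or_ge n (s + 1) with h | h
    · obtain ⟨j, rfl⟩ := Nat.exists_eq_succ_of_ne_zero (by omega : s ≠ 0)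
      exact ih (by omega) hw.pred
    · have : n = s + 1 := by omega
      subst this; exact hw

lemma isZiminImage_of_le_ziminType {n : ℕ} {w : List α} (hn : 1 ≤ n)
    (h : n ≤ ziminType w) : IsZiminImage n w := by
  have hne : {k | IsZiminImage k w}.Nonempty := by
    by_contra hc
    rw [Set.not_nonempty_iff_eq_empty] at hc
    have : ziminType w = 0 := by simp [ziminType, hc]
    omega
  exact isZiminImage_of_le hn _ h (Nat.sSup_mem hne (bddAbove_setOf_isZiminImage w))

lemma isZiminImage_sandwich {n : ℕ} {u g : List α} (h : IsZiminImage n u) (hg : g ≠ []) :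
    IsZiminImage (n + 1) (u ++ g ++ u) := by
  obtain ⟨f, hne, rfl⟩ := h
  refine ⟨fun i => if i = n then g else f i, fun i => ?_, ?_⟩
  · by_cases hi : i = n <;> simp [hi, hg, hne i]
  · have hcong : (ziminWord n).flatMap (fun i => if i = n then g else f i)
        = (ziminWord n).flatMap f :=
      flatMap_congr' _ _ _ (fun a ha => by simp [Nat.ne_of_lt (mem_ziminWord_lt ha)])
    simp [ziminWord, List.flatMap_append, List.flatMap_cons, hcong, List.append_assoc]

lemma exists_minimal_factor {n : ℕ} (hn : 1 ≤ n) {u : List α} (h : IsZiminImage n u) :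
    ∃ v, v <:+: u ∧ IsMinimalZimin n v := by
  set S : Set ℕ := {l | ∃ v : List α, v <:+: u ∧ IsZiminImage n v ∧ v.length = l} with hS
  have hSne : S.Nonempty := ⟨u.length, u, List.infix_refl u, h, rfl⟩
  obtain ⟨v, hvu, hv, hvl⟩ := Nat.sInf_mem hSne
  refine ⟨v, hvu, ?_, ?_⟩
  · refine le_antisymm ?_ (le_ziminType hv)
    by_contra hc
    push_neg at hc
    have htv : IsZiminImage (ziminType v) v := isZiminImage_ziminType hv
    obtain ⟨s, hst⟩ := Nat.exists_eq_succ_of_ne_zero (by omega : ziminType v ≠ 0)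
    rw [hst] at htv
    obtain ⟨A, x, hA, hx, hvEq⟩ := htv.succ_elim
    have hAn : IsZiminImage n A := isZiminImage_of_le hn s (by omega) hA
    have hAinfix : A <:+: v := ⟨[], x ++ A, by simp [hvEq, List.append_assoc]⟩
    have hxlen : 1 ≤ x.length := List.length_pos_iff.mpr hx
    have hAlt : A.length < v.length := by
      have : v.length = A.length + x.length + A.length := by
        rw [hvEq, List.length_append, List.length_append]
      omega
    have hmemA : A.length ∈ S := ⟨A, hAinfix.trans hvu, hAn, rfl⟩
    have := Nat.sInf_le hmemA
    omega
  · intro v' hv'v hne'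
    by_contra hc
    push_neg at hc
    have h1 : IsZiminImage n v' := isZiminImage_of_le_ziminType hn hc
    have hlt : v'.length < v.length :=
      lt_of_le_of_ne hv'v.sublist.length_le
        (fun he => hne' (hv'v.sublist.eq_of_length he))
    have hmemv : v'.length ∈ S := ⟨v', hv'v.trans hvu, h1, rfl⟩
    have := Nat.sInf_le hmemv
    omega

lemma take_drop_decomp (w : List α) (a f : ℕ) :
    w = w.take a ++ ((w.drop a).take f ++ w.drop (a + f)) := by
  conv_lhs => rw [← List.take_append_drop a w]
  congr 1
  conv_lhs => rw [← List.take_append_drop f (w.drop a)]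
  rw [List.drop_drop]

end ZiminAux

/-- Lemma 9: for `n, k ≥ 2` (assuming `f(n,k)` is finite),
`f(n+1,k) ≤ (f(n,k)+1)·m(n,k) + f(n,k)`; in particular every `k`-ary word of
that length contains an embedded `Z_{n+1}`. -/
theorem fbound_succ_le (n k : ℕ) (hn : 2 ≤ n) (hk : 2 ≤ k)
    (hfin : {N | ∀ w : List (Fin k), N ≤ w.length → ziminEmbeds n w}.Nonempty) :
    fbound (n + 1) k ≤ (fbound n k + 1) * mcount n k + fbound n k ∧
    ∀ w : List (Fin k), (fbound n k + 1) * mcount n k + fbound n k ≤ w.length →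
      ziminEmbeds (n + 1) w := by
  classical
  have hn1 : 1 ≤ n := by omega
  set f := fbound n k with hf
  set m := mcount n k with hm
  have hfmem : ∀ w : List (Fin k), f ≤ w.length → ziminEmbeds n w := Nat.sInf_mem hfin
  have hMlen : ∀ v : List (Fin k), IsMinimalZimin n v → v.length ≤ f := by
    intro v hv
    by_contra hc
    push_neg at hc
    obtain ⟨u, huf, hui⟩ := hfmem (v.take f) (by rw [List.length_take]; omega)
    have huv : u <:+: v := huf.trans (List.take_prefix f v).isInfix
    have hune : u ≠ v := by
      rintro rfl
      have h1 := huf.sublist.length_le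
      rw [List.length_take] at h1
      omega
    have h2 := hv.2 u huv hune
    have h3 := le_ziminType hui
    omega
  have hMfin : {w : List (Fin k) | IsMinimalZimin n w}.Finite :=
    (List.finite_length_le (Fin k) f).subset (fun v hv => hMlen v hv)
  have key : ∀ w : List (Fin k), (f + 1) * m + f ≤ w.length → ziminEmbeds (n + 1) w := by
    intro w hwlen
    have hub : ∀ i, i ≤ m → i * (f + 1) + f ≤ w.length := by
      intro i hi
      have h1 : i * (f + 1) ≤ m * (f + 1) := Nat.mul_le_mul_right _ hi
      have h2 : m * (f + 1) = (f + 1) * m := Nat.mul_comm _ _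
      omega
    have hblklen : ∀ i, i ≤ m → ((w.drop (i * (f + 1))).take f).length = f := by
      intro i hi
      have := hub i hi
      simp only [List.length_take, List.length_drop]
      omega
    have hex : ∀ i, i ≤ m →
        ∃ v, v <:+: (w.drop (i * (f + 1))).take f ∧ IsMinimalZimin n v := by
      intro i hi
      obtain ⟨u, hu1, hu2⟩ := hfmem ((w.drop (i * (f + 1))).take f) (by rw [hblklen i hi])
      obtain ⟨v, hv1, hv2⟩ := exists_minimal_factor hn1 hu2
      exact ⟨v, hv1.trans hu1, hv2⟩
    have hex' : ∀ i : ℕ, ∃ v : List (Fin k),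
        i ≤ m → v <:+: (w.drop (i * (f + 1))).take f ∧ IsMinimalZimin n v := by
      intro i
      by_cases hi : i ≤ m
      · obtain ⟨v, hv⟩ := hex i hi
        exact ⟨v, fun _ => hv⟩
      · exact ⟨[], fun h => absurd h hi⟩
    choose V hVspec using hex'
    have hcard : hMfin.toFinset.card = m := (Set.ncard_eq_toFinset_card _ hMfin).symm
    obtain ⟨i, hi, j, hj, hij, hVij⟩ :=
      Finset.exists_ne_map_eq_of_card_lt_of_maps_to
        (s := Finset.range (m + 1)) (t := hMfin.toFinset) (f := V)
        (by rw [Finset.card_range, hcard]; omega)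
        (fun i hi => by
          rw [Finset.mem_coe, Set.Finite.mem_toFinset]
          exact (hVspec i (Nat.lt_succ_iff.mp (Finset.mem_range.mp hi))).2)
    rw [Finset.mem_range, Nat.lt_succ_iff] at hi hj
    have main : ∀ i j : ℕ, i < j → j ≤ m → V i = V j → ziminEmbeds (n + 1) w := by
      intro i j hlt hjm hVeq
      have him : i ≤ m := le_trans (le_of_lt hlt) hjm
      obtain ⟨hVi1, hVi2⟩ := hVspec i him
      obtain ⟨hVj1, _⟩ := hVspec j hjm
      rw [hVeq] at hVi1 hVi2
      have huZ : IsZiminImage n (V j) :=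
        isZiminImage_of_le_ziminType hn1 (le_of_eq hVi2.1.symm)
      have hab : i * (f + 1) + f + 1 ≤ j * (f + 1) := by
        have h1 : (i + 1) * (f + 1) ≤ j * (f + 1) := Nat.mul_le_mul_right _ hlt
        have h2 : (i + 1) * (f + 1) = i * (f + 1) + (f + 1) := by ring
        omega
      have hbw : j * (f + 1) + f ≤ w.length := hub j hjm
      have hw1 : w = w.take (i * (f + 1)) ++
          ((w.drop (i * (f + 1))).take f ++ w.drop (i * (f + 1) + f)) :=
        take_drop_decomp w (i * (f + 1)) f
      have hw2 : w.drop (i * (f + 1) + f) =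
          (w.drop (i * (f + 1) + f)).take (j * (f + 1) - (i * (f + 1) + f)) ++
            w.drop (j * (f + 1)) := by
        conv_lhs => rw [← List.take_append_drop (j * (f + 1) - (i * (f + 1) + f))
          (w.drop (i * (f + 1) + f))]
        rw [List.drop_drop]
        have h3 : i * (f + 1) + f + (j * (f + 1) - (i * (f + 1) + f)) = j * (f + 1) := by
          omega
        rw [h3]
      have hw3 : w.drop (j * (f + 1)) =
          (w.drop (j * (f + 1))).take f ++ w.drop (j * (f + 1) + f) := by
        conv_lhs => rw [← List.take_append_drop f (w.drop (j * (f + 1)))]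
        rw [List.drop_drop]
      have hmidlen : ((w.drop (i * (f + 1) + f)).take
          (j * (f + 1) - (i * (f + 1) + f))).length = j * (f + 1) - (i * (f + 1) + f) := by
        simp only [List.length_take, List.length_drop]
        omega
      obtain ⟨s1, t1, hs1⟩ := hVi1
      obtain ⟨s2, t2, hs2⟩ := hVj1
      refine ⟨V j ++ (t1 ++ (w.drop (i * (f + 1) + f)).take
          (j * (f + 1) - (i * (f + 1) + f)) ++ s2) ++ V j,
        ⟨w.take (i * (f + 1)) ++ s1, t2 ++ w.drop (j * (f + 1) + f), ?_⟩,
        isZiminImage_sandwich huZ (List.ne_nil_of_length_pos (by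
          simp only [List.length_append]
          omega))⟩
      conv_rhs => rw [hw1, hw2, hw3]
      rw [← hs1, ← hs2]
      simp [List.append_assoc]
    rcases hij.lt_or_gt with hlt | hlt
    · exact main i j hlt hj hVij
    · exact main j i hlt hi hVij.symm
  exact ⟨Nat.sInf_le key, key⟩
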